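/- arXiv:2012.14611 — 11 statements merged into one kernel-verified Lean document; each statement's English description precedes it below -/
import Mathlib

section
/- Let P be a partial order, f an order automorphism of P, and x, y ∈ P. Then x ∼_f y if and only if there exist x', x'' with x' ∼_f x and x'' ∼_f x, and y', y'' with y' ∼_f y and y'' ∼_f y, such that x' ≤ y' and y'' ≤ x''. -/
variable {P : Type*} [PartialOrder P]

/-- `x ∼_f y` iff there are `i j : ℤ` with `f^i x ≤ y ≤ f^j x`. -/
def orbRel (f : P ≃o P) (x y : P) : Prop :=
  ∃ i j : ℤ, (f ^ i) x ≤ y ∧ y ≤ (f ^ j) x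

lemma zpow_apply_add (f : P ≃o P) (i j : ℤ) (x : P) :
    (f ^ (i + j)) x = (f ^ i) ((f ^ j) x) := by
  rw [zpow_add]; rfl

lemma zpow_mono (f : P ≃o P) (i : ℤ) {a b : P} (h : a ≤ b) :
    (f ^ i) a ≤ (f ^ i) b := (f ^ i).monotone h

/-- Interlacing orbitals are equal: `x ∼_f y` iff there are `x', x'' ∼_f x` and
`y', y'' ∼_f y` with `x' ≤ y'` and `y'' ≤ x''`. -/
theorem orbRel_iff_interlacing (f : P ≃o P) (x y : P) :
    orbRel f x y ↔
      ∃ x' x'' y' y'' : P, orbRel f x' x ∧ orbRel f x'' x ∧ orbRel f y' y ∧ orbRel f y'' y ∧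
        x' ≤ y' ∧ y'' ≤ x'' := by
  constructor
  · rintro ⟨i, j, h1, h2⟩
    refine ⟨(f ^ i) x, (f ^ j) x, y, y, ⟨-i, -i, ?_, ?_⟩, ⟨-j, -j, ?_, ?_⟩,
      ⟨0, 0, le_refl _, le_refl _⟩, ⟨0, 0, le_refl _, le_refl _⟩, h1, h2⟩ <;>
      simp [← zpow_apply_add]
  · rintro ⟨x', x'', y', y'', ⟨a, b, hx1, hx2⟩, ⟨a', _, hx1', _⟩, ⟨c, _, hy1, _⟩,
      ⟨_, d', _, hy2'⟩, h1, h2⟩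
    refine ⟨c - b, d' - a', ?_, ?_⟩
    · have : (f ^ (-b)) x ≤ x' := by
        have := zpow_mono f (-b) hx2
        rwa [← zpow_apply_add, neg_add_cancel, zpow_zero] at this
      calc (f ^ (c - b)) x = (f ^ c) ((f ^ (-b)) x) := by
            rw [← zpow_apply_add]; ring_nf
        _ ≤ (f ^ c) x' := zpow_mono f c this
        _ ≤ (f ^ c) y' := zpow_mono f c h1
        _ ≤ y := hy1
    · have hx : x'' ≤ (f ^ (-a')) x := by
        have := zpow_mono f (-a') hx1'
        rwa [← zpow_apply_add, neg_add_cancel, zpow_zero] at this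
      calc y ≤ (f ^ d') y'' := hy2'
        _ ≤ (f ^ d') x'' := zpow_mono f d' h2
        _ ≤ (f ^ d') ((f ^ (-a')) x) := zpow_mono f d' hx
        _ = (f ^ (d' - a')) x := by rw [← zpow_apply_add]; ring_nf
end

section
/- Let P be a partial order, f an order automorphism of P, and x, y ∈ P with x ∼_f y. Then parity(x, f) = parity(y, f). Moreover, if this common parity is 0, then sp(x, f) = sp(y, f). -/
variable {P : Type*} [PartialOrder P]

/-- The spiral length of `x` under `f`: the least `n ≥ 1` such that `x` and `f^n x`
are comparable, and `∞` if no such `n` exists. -/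
noncomputable def spiral (f : P ≃o P) (x : P) : ℕ∞ :=
  sInf ((fun m : ℕ => (m : ℕ∞)) ''
    {m : ℕ | 1 ≤ m ∧ (x ≤ (f ^ (m : ℤ)) x ∨ (f ^ (m : ℤ)) x ≤ x)})

open Classical in
/-- The parity of `x` under `f`: `+1` if `sp(x,f) = n < ∞` and `x < f^n x`, `-1` if
`sp(x,f) = n < ∞` and `f^n x < x`, and `0` otherwise. -/
noncomputable def parity (f : P ≃o P) (x : P) : ℤ :=
  if ∃ n : ℕ, spiral f x = (n : ℕ∞) ∧ x < (f ^ (n : ℤ)) x then 1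
  else if ∃ n : ℕ, spiral f x = (n : ℕ∞) ∧ (f ^ (n : ℤ)) x < x then -1
  else 0

namespace ParityAux

variable (f : P ≃o P)

def sset (f : P ≃o P) (x : P) : Set ℕ :=
  {m : ℕ | 1 ≤ m ∧ (x ≤ (f ^ (m : ℤ)) x ∨ (f ^ (m : ℤ)) x ≤ x)}

lemma spiral_def (x : P) : spiral f x = sInf ((fun m : ℕ => (m : ℕ∞)) '' sset f x) := rfl

lemma apz (i j : ℤ) (x : P) : (f ^ (i + j)) x = (f ^ i) ((f ^ j) x) := by
  rw [zpow_add]; rfl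

lemma ap_cancel (k : ℤ) (x : P) : (f ^ (-k)) ((f ^ k) x) = x := by
  rw [← apz, neg_add_cancel, zpow_zero]; rfl

lemma chain_le {x : P} {n : ℤ} (h : x ≤ (f ^ n) x) : ∀ t : ℕ, x ≤ (f ^ ((t : ℤ) * n)) x := by
  intro t
  induction t with
  | zero => simp
  | succ t ih =>
    have h2 : (f ^ n) x ≤ (f ^ (n + (t : ℤ) * n)) x := by
      rw [apz]; exact (f ^ n).monotone ih
    have e : (((t : ℕ) + 1 : ℕ) : ℤ) * n = n + (t : ℤ) * n := by push_cast; ring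
    rw [e]; exact h.trans h2

lemma chain_ge {x : P} {n : ℤ} (h : (f ^ n) x ≤ x) : ∀ t : ℕ, (f ^ ((t : ℤ) * n)) x ≤ x := by
  intro t
  induction t with
  | zero => simp
  | succ t ih =>
    have h2 : (f ^ ((t : ℤ) * n + n)) x ≤ (f ^ ((t : ℤ) * n)) x := by
      rw [apz]; exact (f ^ ((t : ℤ) * n)).monotone h
    have e : (((t : ℕ) + 1 : ℕ) : ℤ) * n = (t : ℤ) * n + n := by push_cast; ring
    rw [e]; exact h2.trans ih

lemma chain_lt {x : P} {n : ℤ} (h : x < (f ^ n) x) :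
    ∀ t : ℕ, x < (f ^ (((t : ℤ) + 1) * n)) x := by
  intro t
  induction t with
  | zero => simpa using h
  | succ t ih =>
    have h2 : (f ^ (((t : ℤ) + 1) * n)) x < (f ^ (((t : ℤ) + 1) * n + n)) x := by
      rw [apz]; exact (f ^ (((t : ℤ) + 1) * n)).strictMono h
    have e : ((((t : ℕ) + 1 : ℕ) : ℤ) + 1) * n = ((t : ℤ) + 1) * n + n := by push_cast; ring
    rw [e]; exact ih.trans h2

lemma chain_gt {x : P} {n : ℤ} (h : (f ^ n) x < x) :
    ∀ t : ℕ, (f ^ (((t : ℤ) + 1) * n)) x < x := by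
  intro t
  induction t with
  | zero => simpa using h
  | succ t ih =>
    have h2 : (f ^ (((t : ℤ) + 1) * n + n)) x < (f ^ (((t : ℤ) + 1) * n)) x := by
      rw [apz]; exact (f ^ (((t : ℤ) + 1) * n)).strictMono h
    have e : ((((t : ℕ) + 1 : ℕ) : ℤ) + 1) * n = ((t : ℤ) + 1) * n + n := by push_cast; ring
    rw [e]; exact h2.trans ih

lemma no_mix_up {x : P} {n m : ℤ} (hn : 1 ≤ n) (hm : 1 ≤ m)
    (h1 : x < (f ^ n) x) (h2 : (f ^ m) x ≤ x) : False := by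
  have e1 : x < (f ^ (m * n)) x := by
    have := chain_lt f h1 (m - 1).toNat
    rwa [show ((((m - 1).toNat : ℤ)) + 1) * n = m * n by
      rw [Int.toNat_of_nonneg (by omega)]; ring] at this
  have e2 : (f ^ (n * m)) x ≤ x := by
    have := chain_ge f h2 n.toNat
    rwa [Int.toNat_of_nonneg (by omega)] at this
  rw [mul_comm n m] at e2
  exact absurd (e1.trans_le e2) (lt_irrefl x)

lemma no_mix_down {x : P} {n m : ℤ} (hn : 1 ≤ n) (hm : 1 ≤ m)
    (h1 : (f ^ n) x < x) (h2 : x ≤ (f ^ m) x) : False := by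
  have e1 : (f ^ (m * n)) x < x := by
    have := chain_gt f h1 (m - 1).toNat
    rwa [show ((((m - 1).toNat : ℤ)) + 1) * n = m * n by
      rw [Int.toNat_of_nonneg (by omega)]; ring] at this
  have e2 : x ≤ (f ^ (n * m)) x := by
    have := chain_le f h2 n.toNat
    rwa [Int.toNat_of_nonneg (by omega)] at this
  rw [mul_comm n m] at e2
  exact absurd (e2.trans_lt e1) (lt_irrefl x)

lemma orb_symm {x y : P} (h : orbRel f x y) : orbRel f y x := by
  obtain ⟨i, j, h1, h2⟩ := h
  refine ⟨-j, -i, ?_, ?_⟩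
  · have := (f ^ (-j)).monotone h2
    rwa [ap_cancel] at this
  · have := (f ^ (-i)).monotone h1
    rwa [ap_cancel] at this

lemma transfer_up {x y : P} (hxy : orbRel f x y) {n : ℤ} (hn : 1 ≤ n)
    (h : x ≤ (f ^ n) x) : ∃ m : ℤ, 1 ≤ m ∧ y ≤ (f ^ m) y := by
  obtain ⟨i, j, h1, h2⟩ := hxy
  set t : ℕ := (1 + i - j).toNat with ht
  refine ⟨j - i + (t : ℤ) * n, ?_, ?_⟩
  · have ht1 : (1 + i - j : ℤ) ≤ (t : ℤ) := Int.self_le_toNat _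
    have ht2 : (t : ℤ) ≤ (t : ℤ) * n := le_mul_of_one_le_right (Int.natCast_nonneg t) hn
    linarith
  · have c1 : x ≤ (f ^ ((t : ℤ) * n)) x := chain_le f h t
    have c2 : (f ^ j) x ≤ (f ^ (j + (t : ℤ) * n)) x := by
      rw [apz]; exact (f ^ j).monotone c1
    have c3 : (f ^ (j - i + (t : ℤ) * n)) ((f ^ i) x) ≤ (f ^ (j - i + (t : ℤ) * n)) y :=
      (f ^ (j - i + (t : ℤ) * n)).monotone h1
    have e : (f ^ (j + (t : ℤ) * n)) x = (f ^ (j - i + (t : ℤ) * n)) ((f ^ i) x) := by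
      rw [← apz]; congr 1; ring_nf
    calc y ≤ (f ^ j) x := h2
      _ ≤ (f ^ (j + (t : ℤ) * n)) x := c2
      _ = (f ^ (j - i + (t : ℤ) * n)) ((f ^ i) x) := e
      _ ≤ _ := c3

lemma transfer_down {x y : P} (hxy : orbRel f x y) {n : ℤ} (hn : 1 ≤ n)
    (h : (f ^ n) x ≤ x) : ∃ m : ℤ, 1 ≤ m ∧ (f ^ m) y ≤ y := by
  obtain ⟨i, j, h1, h2⟩ := hxy
  set t : ℕ := (1 + j - i).toNat with ht
  refine ⟨i - j + (t : ℤ) * n, ?_, ?_⟩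
  · have ht1 : (1 + j - i : ℤ) ≤ (t : ℤ) := Int.self_le_toNat _
    have ht2 : (t : ℤ) ≤ (t : ℤ) * n := le_mul_of_one_le_right (Int.natCast_nonneg t) hn
    linarith
  · have c1 : (f ^ ((t : ℤ) * n)) x ≤ x := chain_ge f h t
    have c2 : (f ^ (i + (t : ℤ) * n)) x ≤ (f ^ i) x := by
      rw [apz]; exact (f ^ i).monotone c1
    have c3 : (f ^ (i - j + (t : ℤ) * n)) y ≤ (f ^ (i - j + (t : ℤ) * n)) ((f ^ j) x) :=
      (f ^ (i - j + (t : ℤ) * n)).monotone h2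
    have e : (f ^ (i - j + (t : ℤ) * n)) ((f ^ j) x) = (f ^ (i + (t : ℤ) * n)) x := by
      rw [← apz]; congr 1; ring_nf
    calc (f ^ (i - j + (t : ℤ) * n)) y ≤ (f ^ (i - j + (t : ℤ) * n)) ((f ^ j) x) := c3
      _ = (f ^ (i + (t : ℤ) * n)) x := e
      _ ≤ (f ^ i) x := c2
      _ ≤ y := h1

def upP (f : P ≃o P) (x : P) : Prop := ∃ n : ℤ, 1 ≤ n ∧ x < (f ^ n) x

def downP (f : P ≃o P) (x : P) : Prop := ∃ n : ℤ, 1 ≤ n ∧ (f ^ n) x < x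

lemma spiral_spec {x : P} (h : (sset f x).Nonempty) :
    ∃ n : ℕ, spiral f x = n ∧ n ∈ sset f x ∧ ∀ m ∈ sset f x, n ≤ m := by
  have himg : ((fun m : ℕ => (m : ℕ∞)) '' sset f x).Nonempty := h.image _
  obtain ⟨n, hn, he⟩ := csInf_mem himg
  refine ⟨n, ?_, hn, ?_⟩
  · rw [spiral_def]; exact he.symm
  · intro m hm
    have h1 : sInf ((fun m : ℕ => (m : ℕ∞)) '' sset f x) ≤ (m : ℕ∞) :=
      sInf_le ⟨m, hm, rfl⟩
    rw [← he] at h1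
    have h2 : (n : ℕ∞) ≤ (m : ℕ∞) := h1
    exact_mod_cast h2

lemma spiral_top {x : P} (h : ¬ (sset f x).Nonempty) : spiral f x = ⊤ := by
  rw [spiral_def, Set.not_nonempty_iff_eq_empty.mp h, Set.image_empty, sInf_empty]

lemma mem_of_spiral_eq {x : P} {n : ℕ} (h : spiral f x = n) :
    n ∈ sset f x ∧ ∀ m ∈ sset f x, n ≤ m := by
  by_cases hS : (sset f x).Nonempty
  · obtain ⟨k, hk, hmem, hmin⟩ := spiral_spec f hS
    have : n = k := by rw [h] at hk; exact_mod_cast hk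
    subst this; exact ⟨hmem, hmin⟩
  · exfalso; rw [spiral_top f hS] at h; simp at h

lemma up_spiral {x : P} (h : upP f x) :
    ∃ n : ℕ, spiral f x = n ∧ 1 ≤ n ∧ x < (f ^ (n : ℤ)) x := by
  obtain ⟨n, hn1, hlt⟩ := h
  have hmem : n.toNat ∈ sset f x := by
    refine ⟨by omega, Or.inl ?_⟩
    rw [Int.toNat_of_nonneg (by omega)]; exact hlt.le
  obtain ⟨k, hk, ⟨hk1, hcomp⟩, _⟩ := spiral_spec f ⟨_, hmem⟩
  have hknot : ¬ (f ^ ((k : ℕ) : ℤ)) x ≤ x := fun hle =>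
    no_mix_up f hn1 (by exact_mod_cast hk1) hlt hle
  have hxle : x ≤ (f ^ ((k : ℕ) : ℤ)) x := hcomp.resolve_right hknot
  exact ⟨k, hk, hk1, lt_of_le_of_ne hxle fun he => hknot he.symm.le⟩

lemma down_spiral {x : P} (h : downP f x) :
    ∃ n : ℕ, spiral f x = n ∧ 1 ≤ n ∧ (f ^ (n : ℤ)) x < x := by
  obtain ⟨n, hn1, hlt⟩ := h
  have hmem : n.toNat ∈ sset f x := by
    refine ⟨by omega, Or.inr ?_⟩
    rw [Int.toNat_of_nonneg (by omega)]; exact hlt.le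
  obtain ⟨k, hk, ⟨hk1, hcomp⟩, _⟩ := spiral_spec f ⟨_, hmem⟩
  have hknot : ¬ x ≤ (f ^ ((k : ℕ) : ℤ)) x := fun hle =>
    no_mix_down f hn1 (by exact_mod_cast hk1) hlt hle
  have hxle : (f ^ ((k : ℕ) : ℤ)) x ≤ x := hcomp.resolve_left hknot
  exact ⟨k, hk, hk1, lt_of_le_of_ne hxle fun he => hknot he.symm.le⟩

open Classical in
lemma parity_up {x : P} (h : upP f x) : parity f x = 1 := by
  obtain ⟨k, hk, _, hlt⟩ := up_spiral f h
  simp only [parity]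
  rw [if_pos ⟨k, hk, hlt⟩]

open Classical in
lemma parity_down {x : P} (h : downP f x) : parity f x = -1 := by
  obtain ⟨k, hk, _, hlt⟩ := down_spiral f h
  have c1 : ¬ ∃ n : ℕ, spiral f x = (n : ℕ∞) ∧ x < (f ^ (n : ℤ)) x := by
    rintro ⟨n, hn, hx⟩
    rw [hk] at hn
    have : n = k := by exact_mod_cast hn.symm
    subst this
    exact absurd (hx.trans hlt) (lt_irrefl x)
  simp only [parity]
  rw [if_neg c1, if_pos ⟨k, hk, hlt⟩]

open Classical in
lemma parity_zero {x : P} (hu : ¬ upP f x) (hd : ¬ downP f x) : parity f x = 0 := by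
  have c1 : ¬ ∃ n : ℕ, spiral f x = (n : ℕ∞) ∧ x < (f ^ (n : ℤ)) x := by
    rintro ⟨n, hn, hx⟩
    have h1 : 1 ≤ n := (mem_of_spiral_eq f hn).1.1
    exact hu ⟨n, by exact_mod_cast h1, hx⟩
  have c2 : ¬ ∃ n : ℕ, spiral f x = (n : ℕ∞) ∧ (f ^ (n : ℤ)) x < x := by
    rintro ⟨n, hn, hx⟩
    have h1 : 1 ≤ n := (mem_of_spiral_eq f hn).1.1
    exact hd ⟨n, by exact_mod_cast h1, hx⟩
  simp only [parity]
  rw [if_neg c1, if_neg c2]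

lemma up_transfer {x y : P} (hxy : orbRel f x y) (h : upP f x) : upP f y := by
  obtain ⟨n, hn, hlt⟩ := h
  obtain ⟨m, hm, hle⟩ := transfer_up f hxy hn hlt.le
  refine ⟨m, hm, lt_of_le_of_ne hle fun he => ?_⟩
  obtain ⟨m', hm', hle'⟩ := transfer_down f (orb_symm f hxy) hm (le_of_eq he.symm)
  exact no_mix_up f hn hm' hlt hle'

lemma down_transfer {x y : P} (hxy : orbRel f x y) (h : downP f x) : downP f y := by
  obtain ⟨n, hn, hlt⟩ := h
  obtain ⟨m, hm, hle⟩ := transfer_down f hxy hn hlt.le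
  refine ⟨m, hm, lt_of_le_of_ne hle fun he => ?_⟩
  obtain ⟨m', hm', hle'⟩ := transfer_up f (orb_symm f hxy) hm (le_of_eq he.symm)
  exact no_mix_down f hn hm' hlt hle'

lemma not_lt_self {x : P} (hu : ¬ upP f x) (hd : ¬ downP f x) (k : ℤ) :
    ¬ x < (f ^ k) x := by
  intro hlt
  rcases lt_trichotomy k 0 with hk | hk | hk
  · have h2 : (f ^ (-k)) x < (f ^ (-k)) ((f ^ k) x) := (f ^ (-k)).strictMono hlt
    rw [ap_cancel] at h2
    exact hd ⟨-k, by omega, h2⟩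
  · subst hk; simp at hlt
  · exact hu ⟨k, by omega, hlt⟩

lemma not_gt_self {x : P} (hu : ¬ upP f x) (hd : ¬ downP f x) (k : ℤ) :
    ¬ (f ^ k) x < x := by
  intro hlt
  rcases lt_trichotomy k 0 with hk | hk | hk
  · have h2 : (f ^ (-k)) ((f ^ k) x) < (f ^ (-k)) x := (f ^ (-k)).strictMono hlt
    rw [ap_cancel] at h2
    exact hu ⟨-k, by omega, h2⟩
  · subst hk; simp at hlt
  · exact hd ⟨k, by omega, hlt⟩

lemma comparable_eq {x : P} (hu : ¬ upP f x) (hd : ¬ downP f x) {k : ℤ}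
    (h : x ≤ (f ^ k) x ∨ (f ^ k) x ≤ x) : (f ^ k) x = x := by
  rcases h with h | h
  · exact ((h.lt_or_eq).resolve_left (not_lt_self f hu hd k)).symm
  · exact (h.lt_or_eq).resolve_left (not_gt_self f hu hd k)

lemma fixed_zpow (g : P ≃o P) {x : P} (h : g x = x) : ∀ s : ℤ, (g ^ s) x = x := by
  have hinv : g⁻¹ x = x := by
    have h2 : g⁻¹ (g x) = x := by simp
    rwa [h] at h2
  intro s
  induction s using Int.induction_on with
  | zero => rfl
  | succ k ih =>
    rw [zpow_add_one]
    show (g ^ (k : ℤ)) (g x) = x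
    rw [h]; exact ih
  | pred k ih =>
    rw [zpow_sub_one]
    show (g ^ (-(k : ℤ))) (g⁻¹ x) = x
    rw [hinv]; exact ih

lemma period_dvd {x : P} {q : ℕ} (hq1 : 1 ≤ q) (hmin : ∀ m ∈ sset f x, q ≤ m)
    (hq : (f ^ (q : ℤ)) x = x) {k : ℤ} (hk : (f ^ k) x = x) : (q : ℤ) ∣ k := by
  set r := k % (q : ℤ) with hr
  have hq0 : (0 : ℤ) < (q : ℤ) := by exact_mod_cast hq1
  have hr0 : 0 ≤ r := Int.emod_nonneg k (by omega)
  have hrq : r < (q : ℤ) := Int.emod_lt_of_pos k hq0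
  have hfix : (f ^ r) x = x := by
    have h1 : (f ^ ((q : ℤ) * (k / (q : ℤ)))) x = x := by
      rw [zpow_mul]; exact fixed_zpow (f ^ (q : ℤ)) hq _
    have h2 : (f ^ k) x = (f ^ r) ((f ^ ((q : ℤ) * (k / (q : ℤ)))) x) := by
      rw [← apz, hr, Int.emod_add_mul_ediv]
    rw [h1, hk] at h2
    exact h2.symm
  by_contra hnd
  have hr1 : 1 ≤ r := by
    rcases eq_or_lt_of_le hr0 with h | h
    · exact absurd (Int.dvd_of_emod_eq_zero h.symm) hnd
    · omega
  have hmem : r.toNat ∈ sset f x := by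
    refine ⟨by omega, Or.inl ?_⟩
    rw [Int.toNat_of_nonneg hr0, hfix]
  have := hmin _ hmem
  omega

lemma dvd_period {x y : P} {q p : ℕ} (hq1 : 1 ≤ q)
    (hqmin : ∀ m ∈ sset f x, q ≤ m) (hqfix : (f ^ (q : ℤ)) x = x)
    (hu : ¬ upP f x) (hd : ¬ downP f x)
    (hxy : orbRel f x y) (hpfix : (f ^ (p : ℤ)) y = y) : (q : ℤ) ∣ (p : ℤ) := by
  obtain ⟨i, j, h1, h2⟩ := hxy
  have e1 : x ≤ (f ^ (j - i)) x := by
    have h3 : (f ^ (-i)) ((f ^ i) x) ≤ (f ^ (-i)) ((f ^ j) x) :=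
      (f ^ (-i)).monotone (h1.trans h2)
    rw [ap_cancel, ← apz] at h3
    rwa [show -i + j = j - i by ring] at h3
  have e2 : (f ^ ((p : ℤ) + i - j)) x ≤ x := by
    have h3 : (f ^ ((p : ℤ) + i)) x ≤ (f ^ j) x := by
      rw [apz]
      calc (f ^ (p : ℤ)) ((f ^ i) x) ≤ (f ^ (p : ℤ)) y := (f ^ (p : ℤ)).monotone h1
        _ = y := hpfix
        _ ≤ (f ^ j) x := h2
    have h4 : (f ^ (-j)) ((f ^ ((p : ℤ) + i)) x) ≤ (f ^ (-j)) ((f ^ j) x) :=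
      (f ^ (-j)).monotone h3
    rw [ap_cancel, ← apz] at h4
    rwa [show -j + ((p : ℤ) + i) = (p : ℤ) + i - j by ring] at h4
  have d1 : (q : ℤ) ∣ (j - i) :=
    period_dvd f hq1 hqmin hqfix (comparable_eq f hu hd (Or.inl e1))
  have d2 : (q : ℤ) ∣ ((p : ℤ) + i - j) :=
    period_dvd f hq1 hqmin hqfix (comparable_eq f hu hd (Or.inr e2))
  have e3 : (p : ℤ) = ((p : ℤ) + i - j) + (j - i) := by ring
  rw [e3]; exact dvd_add d2 d1

end ParityAux

open ParityAux in
/-- Parity is orbital-invariant, and for parity-0 orbitals so is spiral length: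
if `x ∼_f y` then `parity(x,f) = parity(y,f)`, and if moreover this common parity is `0`
then `sp(x,f) = sp(y,f)`. -/
theorem parity_orbital_invariant (f : P ≃o P) (x y : P) (hxy : orbRel f x y) :
    parity f x = parity f y ∧ (parity f x = 0 → spiral f x = spiral f y) := by
  have hyx := orb_symm f hxy
  by_cases hu : upP f x
  · have huy := up_transfer f hxy hu
    have p1 := parity_up f hu
    have p2 := parity_up f huy
    exact ⟨p1.trans p2.symm, fun h0 => by rw [p1] at h0; exact absurd h0 one_ne_zero⟩
  · by_cases hd : downP f x
    · have hdy := down_transfer f hxy hd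
      have p1 := parity_down f hd
      have p2 := parity_down f hdy
      refine ⟨p1.trans p2.symm, fun h0 => ?_⟩
      rw [p1] at h0; exact absurd h0 (by norm_num)
    · have huy : ¬ upP f y := fun h => hu (up_transfer f hyx h)
      have hdy : ¬ downP f y := fun h => hd (down_transfer f hyx h)
      refine ⟨(parity_zero f hu hd).trans (parity_zero f huy hdy).symm, fun _ => ?_⟩
      by_cases hS : (sset f x).Nonempty
      · obtain ⟨q, hqsp, ⟨hq1, hqc⟩, hqmin⟩ := spiral_spec f hS
        have hqfix : (f ^ ((q : ℕ) : ℤ)) x = x := comparable_eq f hu hd hqc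
        have hq1' : (1 : ℤ) ≤ ((q : ℕ) : ℤ) := by exact_mod_cast hq1
        obtain ⟨m, hm1, hmle⟩ := transfer_up f hxy hq1' (le_of_eq hqfix.symm)
        have hmem : m.toNat ∈ sset f y := by
          refine ⟨by omega, Or.inl ?_⟩
          rw [Int.toNat_of_nonneg (by omega)]; exact hmle
        obtain ⟨p, hpsp, ⟨hp1, hpc⟩, hpmin⟩ := spiral_spec f ⟨_, hmem⟩
        have hpfix : (f ^ ((p : ℕ) : ℤ)) y = y := comparable_eq f huy hdy hpc
        have dqp : ((q : ℕ) : ℤ) ∣ ((p : ℕ) : ℤ) :=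
          dvd_period f hq1 hqmin hqfix hu hd hxy hpfix
        have dpq : ((p : ℕ) : ℤ) ∣ ((q : ℕ) : ℤ) :=
          dvd_period f hp1 hpmin hpfix huy hdy hyx hqfix
        have hpq : p = q := by
          have := Int.dvd_antisymm (by positivity) (by positivity) dpq dqp
          exact_mod_cast this
        rw [hqsp, hpsp, hpq]
      · have hSy : ¬ (sset f y).Nonempty := by
          rintro ⟨m, hm1, hc⟩
          apply hS
          rcases hc with hc | hc
          · have hm1' : (1 : ℤ) ≤ ((m : ℕ) : ℤ) := by exact_mod_cast hm1
            obtain ⟨m', hm'1, hle⟩ := transfer_up f hyx hm1' hc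
            exact ⟨m'.toNat, by omega,
              Or.inl (by rw [Int.toNat_of_nonneg (by omega)]; exact hle)⟩
          · have hm1' : (1 : ℤ) ≤ ((m : ℕ) : ℤ) := by exact_mod_cast hm1
            obtain ⟨m', hm'1, hle⟩ := transfer_down f hyx hm1' hc
            exact ⟨m'.toNat, by omega,
              Or.inr (by rw [Int.toNat_of_nonneg (by omega)]; exact hle)⟩
        rw [spiral_top f hS, spiral_top f hSy]
end

section
/- Let P be a partial order, f an order automorphism of P, and x ∈ P with parity σ ∈ {−1, +1} and spiral length n = sp(x, f) < ∞. Then for all y ∈ P and all i : ℤ: if x ≤ f^i(y) then x ≤ f^{i+σn}(y), and if y ≤ f^i(x) then y ≤ f^{i+σn}(x). Consequently, the sequences i ↦ (x ≤ f^i(y)) and i ↦ (y ≤ f^i(x)) are eventually periodic with period n on both sides. -/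
variable {P : Type*} [PartialOrder P]

private lemma L_aux (S : ℤ → Prop) (n : ℕ) (hn : 1 ≤ n)
    (step : ∀ i, S i → S (i + n)) :
    ∃ N : ℤ, (∀ i, N ≤ i → (S i ↔ S (i + n))) ∧ (∀ i, i ≤ -N → (S i ↔ S (i - n))) := by
  classical
  have stepk : ∀ (k : ℕ) (i : ℤ), S i → S (i + k * n) := by
    intro k
    induction k with
    | zero => simp
    | succ k ih =>
      intro i hi
      have h1 : S (i + k * n + n) := step _ (ih i hi)
      have he : i + (k:ℤ) * n + n = i + ((k:ℕ)+1 : ℕ) * n := by push_cast; ring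
      rwa [he] at h1
  have stepLe : ∀ i j : ℤ, i ≤ j → (n:ℤ) ∣ (j - i) → S i → S j := by
    rintro i j hij ⟨k, hk⟩ hi
    have hn' : (0:ℤ) < n := by exact_mod_cast hn
    have hk0 : 0 ≤ k := by nlinarith
    have h1 : S (i + k.toNat * n) := stepk k.toNat i hi
    have he : i + (k.toNat : ℤ) * n = j := by
      rw [Int.toNat_of_nonneg hk0]; linarith [hk]
    rwa [he] at h1
  have : NeZero n := ⟨by omega⟩
  set B : Set ℤ := {i | ¬ S i ∧ S (i + n)} with hB
  have hinj : Set.InjOn (fun i : ℤ => (i : ZMod n)) B := by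
    have key : ∀ i ∈ B, ∀ j ∈ B, i < j → ((i : ZMod n) = (j : ZMod n)) → False := by
      intro i hi j hj hij hcast
      have hdvd : (n:ℤ) ∣ (j - i) := by
        have h2 : i ≡ j [ZMOD (n:ℤ)] := (ZMod.intCast_eq_intCast_iff i j n).mp hcast
        exact Int.ModEq.dvd h2
      have hge : (n:ℤ) ≤ j - i := by
        rcases hdvd with ⟨k, hk⟩
        have hn' : (0:ℤ) < n := by exact_mod_cast hn
        have : 0 < k := by nlinarith
        nlinarith
      have hdvd2 : (n:ℤ) ∣ (j - (i + n)) := by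
        rcases hdvd with ⟨k, hk⟩; exact ⟨k - 1, by linarith [hk]⟩
      exact hj.1 (stepLe (i + n) j (by omega) hdvd2 hi.2)
    intro i hi j hj h
    rcases lt_trichotomy i j with h' | h' | h'
    · exact absurd (key i hi j hj h' h) (fun x => x)
    · exact h'
    · exact absurd (key j hj i hi h' h.symm) (fun x => x)
  have hBfin : B.Finite := Set.Finite.of_finite_image (Set.toFinite _) hinj
  obtain ⟨a, ha⟩ := hBfin.bddAbove
  obtain ⟨b, hb⟩ := hBfin.bddBelow
  refine ⟨max (a + 1) (-b + 1), ?_, ?_⟩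
  · intro i hi
    constructor
    · exact step i
    · intro h
      by_contra hS
      have : i ∈ B := ⟨hS, h⟩
      have := ha this
      have : a + 1 ≤ i := le_trans (le_max_left _ _) hi
      omega
  · intro i hi
    have hib : i < b := by
      have : -b + 1 ≤ max (a+1) (-b+1) := le_max_right _ _
      omega
    constructor
    · intro h
      by_contra hS
      have hmem : i - n ∈ B := ⟨hS, by simpa using h⟩
      have := hb hmem
      have hn' : (0:ℤ) < n := by exact_mod_cast hn
      omega
    · intro h
      have := step (i - n) h
      simpa using this

private lemma pow_add_apply {P : Type*} [PartialOrder P] (f : P ≃o P) (i j : ℤ) (z : P) :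
    (f ^ (i + j)) z = (f ^ i) ((f ^ j) z) := by
  rw [zpow_add]; rfl

/-- Let `x` have parity `σ ∈ {−1, +1}` and finite spiral length `n`. Then for all `y` and
`i : ℤ`: `x ≤ f^i y → x ≤ f^{i+σn} y` and `y ≤ f^i x → y ≤ f^{i+σn} x`; consequently, the
sequences `i ↦ (x ≤ f^i y)` and `i ↦ (y ≤ f^i x)` are eventually `n`-periodic on both
sides. -/
theorem b_seq_eventually_periodic (f : P ≃o P) (x : P) (σ : ℤ) (hσ : σ = 1 ∨ σ = -1)
    (hpar : parity f x = σ) (n : ℕ) (hsp : spiral f x = (n : ℕ∞)) :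
    (∀ (y : P) (i : ℤ),
      (x ≤ (f ^ i) y → x ≤ (f ^ (i + σ * n)) y) ∧
      (y ≤ (f ^ i) x → y ≤ (f ^ (i + σ * n)) x)) ∧
    (∀ y : P, ∃ N : ℤ,
      (∀ i : ℤ, N ≤ i →
        ((x ≤ (f ^ i) y ↔ x ≤ (f ^ (i + n)) y) ∧ (y ≤ (f ^ i) x ↔ y ≤ (f ^ (i + n)) x))) ∧
      (∀ i : ℤ, i ≤ -N →
        ((x ≤ (f ^ i) y ↔ x ≤ (f ^ (i - n)) y) ∧ (y ≤ (f ^ i) x ↔ y ≤ (f ^ (i - n)) x)))) := by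
  classical
  have hmono : ∀ (k : ℤ) (a b : P), a ≤ b → (f ^ k) a ≤ (f ^ k) b :=
    fun k a b h => (f ^ k).le_iff_le.mpr h
  -- extract the comparability from parity
  rcases hσ with rfl | rfl
  · -- σ = 1
    have hcond : ∃ m : ℕ, spiral f x = (m : ℕ∞) ∧ x < (f ^ (m : ℤ)) x := by
      by_contra hc
      rw [parity, if_neg hc] at hpar
      split_ifs at hpar
      all_goals omega
    obtain ⟨m, hm, hlt⟩ := hcond
    have hmn : m = n := by
      have := hm.symm.trans hsp
      exact_mod_cast this
    subst hmn
    have hx : x ≤ (f ^ (m : ℤ)) x := hlt.le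
    have hn : 1 ≤ m := by
      by_contra h
      have : m = 0 := by omega
      subst this
      simp at hlt
    -- step lemmas
    have stepa : ∀ (y : P) (i : ℤ), x ≤ (f ^ i) y → x ≤ (f ^ (i + m)) y := by
      intro y i h
      have h2 : (f ^ (m:ℤ)) x ≤ (f ^ (m:ℤ)) ((f ^ i) y) := hmono _ _ _ h
      have h3 : (f ^ ((m:ℤ) + i)) y = (f ^ (m:ℤ)) ((f ^ i) y) := pow_add_apply f _ _ _
      rw [add_comm]
      rw [h3]
      exact le_trans hx h2
    have stepb : ∀ (y : P) (i : ℤ), y ≤ (f ^ i) x → y ≤ (f ^ (i + m)) x := by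
      intro y i h
      have h2 : (f ^ i) x ≤ (f ^ i) ((f ^ (m:ℤ)) x) := hmono _ _ _ hx
      have h3 : (f ^ (i + (m:ℤ))) x = (f ^ i) ((f ^ (m:ℤ)) x) := pow_add_apply f _ _ _
      rw [h3]
      exact le_trans h h2
    constructor
    · intro y i
      constructor
      · intro h
        have := stepa y i h
        rwa [one_mul]
      · intro h
        have := stepb y i h
        rwa [one_mul]
    · intro y
      obtain ⟨Na, ha1, ha2⟩ := L_aux (fun i => x ≤ (f ^ i) y) m hn (stepa y)
      obtain ⟨Nb, hb1, hb2⟩ := L_aux (fun i => y ≤ (f ^ i) x) m hn (stepb y)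
      refine ⟨max Na Nb, ?_, ?_⟩
      · intro i hi
        exact ⟨ha1 i (le_trans (le_max_left _ _) hi),
               hb1 i (le_trans (le_max_right _ _) hi)⟩
      · intro i hi
        refine ⟨ha2 i ?_, hb2 i ?_⟩ <;> omega
  · -- σ = -1
    have hcond1 : ¬ ∃ m : ℕ, spiral f x = (m : ℕ∞) ∧ x < (f ^ (m : ℤ)) x := by
      intro hc
      rw [parity, if_pos hc] at hpar
      omega
    have hcond : ∃ m : ℕ, spiral f x = (m : ℕ∞) ∧ (f ^ (m : ℤ)) x < x := by
      by_contra hc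
      rw [parity, if_neg hcond1, if_neg hc] at hpar
      omega
    obtain ⟨m, hm, hlt⟩ := hcond
    have hmn : m = n := by
      have := hm.symm.trans hsp
      exact_mod_cast this
    subst hmn
    have hn : 1 ≤ m := by
      by_contra h
      have : m = 0 := by omega
      subst this
      simp at hlt
    have hx : x ≤ (f ^ (-(m:ℤ))) x := by
      have h2 : (f ^ (-(m:ℤ))) ((f ^ (m:ℤ)) x) ≤ (f ^ (-(m:ℤ))) x := hmono _ _ _ hlt.le
      rw [← pow_add_apply, neg_add_cancel] at h2
      simpa using h2
    have stepa : ∀ (y : P) (i : ℤ), x ≤ (f ^ i) y → x ≤ (f ^ (i - m)) y := by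
      intro y i h
      have h2 : (f ^ (-(m:ℤ))) x ≤ (f ^ (-(m:ℤ))) ((f ^ i) y) := hmono _ _ _ h
      have h3 : (f ^ ((-(m:ℤ)) + i)) y = (f ^ (-(m:ℤ))) ((f ^ i) y) := pow_add_apply f _ _ _
      have h4 : i - (m:ℤ) = (-(m:ℤ)) + i := by ring
      rw [h4, h3]
      exact le_trans hx h2
    have stepb : ∀ (y : P) (i : ℤ), y ≤ (f ^ i) x → y ≤ (f ^ (i - m)) x := by
      intro y i h
      have h2 : (f ^ i) x ≤ (f ^ i) ((f ^ (-(m:ℤ))) x) := hmono _ _ _ hx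
      have h3 : (f ^ (i + (-(m:ℤ)))) x = (f ^ i) ((f ^ (-(m:ℤ))) x) := pow_add_apply f _ _ _
      have h4 : i - (m:ℤ) = i + (-(m:ℤ)) := by ring
      rw [h4, h3]
      exact le_trans h h2
    constructor
    · intro y i
      have h4 : i + (-1 : ℤ) * m = i - m := by ring
      rw [h4]
      exact ⟨stepa y i, stepb y i⟩
    · intro y
      -- reverse the sequences
      have stepa' : ∀ i : ℤ, (fun k => x ≤ (f ^ (-k)) y) i → (fun k => x ≤ (f ^ (-k)) y) (i + m) := by
        intro i h
        have := stepa y (-i) h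
        have h4 : -i - (m:ℤ) = -(i + m) := by ring
        rwa [h4] at this
      have stepb' : ∀ i : ℤ, (fun k => y ≤ (f ^ (-k)) x) i → (fun k => y ≤ (f ^ (-k)) x) (i + m) := by
        intro i h
        have := stepb y (-i) h
        have h4 : -i - (m:ℤ) = -(i + m) := by ring
        rwa [h4] at this
      obtain ⟨Na, ha1, ha2⟩ := L_aux (fun k => x ≤ (f ^ (-k)) y) m hn stepa'
      obtain ⟨Nb, hb1, hb2⟩ := L_aux (fun k => y ≤ (f ^ (-k)) x) m hn stepb'
      refine ⟨max Na Nb, ?_, ?_⟩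
      · intro i hi
        have hia : -i ≤ -Na := by omega
        have hib : -i ≤ -Nb := by omega
        have h1 := ha2 (-i) hia
        have h2 := hb2 (-i) hib
        simp only [neg_neg] at h1 h2
        have e1 : -(-i - (m:ℤ)) = i + m := by ring
        rw [e1] at h1 h2
        exact ⟨h1, h2⟩
      · intro i hi
        have hia : Na ≤ -i := by omega
        have hib : Nb ≤ -i := by omega
        have h1 := ha1 (-i) hia
        have h2 := hb1 (-i) hib
        simp only [neg_neg] at h1 h2
        have e1 : -(-i + (m:ℤ)) = i - m := by ring
        rw [e1] at h1 h2
        exact ⟨h1, h2⟩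
end

section
/- Let P be a partial order, f and g order automorphisms of P, A ⊆ P an f-invariant subset (f[A] = A), B ⊆ P a g-invariant subset (g[B] = B), and h : A → B a function. Then the following are equivalent: (i) h is an order embedding (for x, y ∈ A, x ≤ y iff h(x) ≤ h(y)) and h(f(x)) = g(h(x)) for all x ∈ A; (ii) for all x, y ∈ A and all i : ℤ, x ≤ f^i(y) iff h(x) ≤ g^i(h(y)); (iii) for all x, y ∈ A and all i ∈ {−1, 0, 1}, x ≤ f^i(y) iff h(x) ≤ g^i(h(y)). In particular, f and g are conjugate in the automorphism group of P if and only if there is a bijection h : P → P satisfying (ii), if and only if there is a bijection h : P → P satisfying (iii). -/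
variable {P : Type*} [PartialOrder P]

private lemma ap_sub_one (f : P ≃o P) (i : ℤ) (x : P) :
    (f ^ (i - 1)) x = (f ^ i) (f⁻¹ x) := by rw [zpow_sub_one]; rfl

private lemma ap_add_one (f : P ≃o P) (i : ℤ) (x : P) :
    (f ^ (i + 1)) x = (f ^ i) (f x) := by rw [zpow_add_one]; rfl

private lemma inv_mem (f : P ≃o P) (A : Set P) (hA : (⇑f) '' A = A) {x : P} (hx : x ∈ A) :
    f⁻¹ x ∈ A := by
  rw [← hA] at hx
  obtain ⟨a, ha, rfl⟩ := hx
  simpa using ha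

private lemma fwd_mem (f : P ≃o P) (A : Set P) (hA : (⇑f) '' A = A) {x : P} (hx : x ∈ A) :
    f x ∈ A := hA ▸ Set.mem_image_of_mem f hx

private lemma iter_mem (f : P ≃o P) (A : Set P) (hA : (⇑f) '' A = A) :
    ∀ i : ℤ, ∀ x ∈ A, (f ^ i) x ∈ A := by
  intro i
  induction i using Int.induction_on with
  | zero => intro x hx; simpa using hx
  | succ n ih => intro x hx; rw [ap_add_one]; exact ih _ (fwd_mem f A hA hx)
  | pred n ih => intro x hx; rw [ap_sub_one]; exact ih _ (inv_mem f A hA hx)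

private lemma iter_conj (f g : P ≃o P) (A : Set P) (hA : (⇑f) '' A = A) (h : P → P)
    (hc : ∀ x ∈ A, h (f x) = g (h x)) :
    ∀ i : ℤ, ∀ x ∈ A, h ((f ^ i) x) = (g ^ i) (h x) := by
  have hc' : ∀ x ∈ A, h (f⁻¹ x) = g⁻¹ (h x) := by
    intro x hx
    have h1 := hc _ (inv_mem f A hA hx)
    have h2 : f (f⁻¹ x) = x := by simp
    rw [h2] at h1
    have := congrArg (⇑g⁻¹) h1
    simpa using this.symm
  intro i
  induction i using Int.induction_on with
  | zero => intro x hx; simp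
  | succ n ih =>
      intro x hx
      rw [ap_add_one, ap_add_one, ih _ (fwd_mem f A hA hx), hc _ hx]
  | pred n ih =>
      intro x hx
      rw [ap_sub_one, ap_sub_one, ih _ (inv_mem f A hA hx), hc' _ hx]

private lemma one_to_two (f g : P ≃o P) (A : Set P) (hA : (⇑f) '' A = A) (h : P → P)
    (hemb : ∀ x ∈ A, ∀ y ∈ A, (x ≤ y ↔ h x ≤ h y)) (hc : ∀ x ∈ A, h (f x) = g (h x)) :
    ∀ x ∈ A, ∀ y ∈ A, ∀ i : ℤ, x ≤ (f ^ i) y ↔ h x ≤ (g ^ i) (h y) := by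
  intro x hx y hy i
  rw [← iter_conj f g A hA h hc i y hy]
  exact hemb x hx _ (iter_mem f A hA i y hy)

private lemma three_to_one (f g : P ≃o P) (A : Set P) (hA : (⇑f) '' A = A) (h : P → P)
    (h3 : ∀ x ∈ A, ∀ y ∈ A, ∀ i : ℤ, (i = -1 ∨ i = 0 ∨ i = 1) →
        (x ≤ (f ^ i) y ↔ h x ≤ (g ^ i) (h y))) :
    (∀ x ∈ A, ∀ y ∈ A, (x ≤ y ↔ h x ≤ h y)) ∧ (∀ x ∈ A, h (f x) = g (h x)) := by
  constructor
  · intro x hx y hy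
    have := h3 x hx y hy 0 (Or.inr (Or.inl rfl))
    simpa using this
  · intro y hy
    have hfy : f y ∈ A := fwd_mem f A hA hy
    have hle : h (f y) ≤ g (h y) := by
      have := h3 (f y) hfy y hy 1 (Or.inr (Or.inr rfl))
      simpa using this.mp le_rfl
    have hge : g (h y) ≤ h (f y) := by
      have := h3 y hy (f y) hfy (-1) (Or.inl rfl)
      simp only [zpow_neg_one] at this
      have h1 : f⁻¹ (f y) = y := by simp
      rw [h1] at this
      have h2 : h y ≤ g⁻¹ (h (f y)) := this.mp le_rfl
      have := g.le_iff_le.mpr h2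
      simpa using this
    exact le_antisymm hle hge

/-- The language `L` encodes conjugacy: for `f`-invariant `A`, `g`-invariant `B`, and
`h : A → B`, the following are equivalent: (i) `h` is an order embedding with
`h ∘ f = g ∘ h`; (ii) `h` preserves all relations `x ≤ f^i y` (`i : ℤ`); (iii) `h`
preserves the relations `x ≤ f^i y` for `i ∈ {−1,0,1}`. In particular, `f` and `g` are
conjugate in `Aut(P)` iff there is a bijection of `P` satisfying (ii), iff there is a
bijection of `P` satisfying (iii). -/
theorem L_embedding_iff_conjugating (f g : P ≃o P) (A B : Set P)
    (hA : (⇑f) '' A = A) (hB : (⇑g) '' B = B) (h : P → P) (hmap : Set.MapsTo h A B) :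
    (((∀ x ∈ A, ∀ y ∈ A, (x ≤ y ↔ h x ≤ h y)) ∧ (∀ x ∈ A, h (f x) = g (h x))) ↔
      (∀ x ∈ A, ∀ y ∈ A, ∀ i : ℤ, x ≤ (f ^ i) y ↔ h x ≤ (g ^ i) (h y))) ∧
    ((∀ x ∈ A, ∀ y ∈ A, ∀ i : ℤ, x ≤ (f ^ i) y ↔ h x ≤ (g ^ i) (h y)) ↔
      (∀ x ∈ A, ∀ y ∈ A, ∀ i : ℤ, (i = -1 ∨ i = 0 ∨ i = 1) →
        (x ≤ (f ^ i) y ↔ h x ≤ (g ^ i) (h y)))) ∧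
    ((∃ k : P ≃o P, ∀ x : P, k (f x) = g (k x)) ↔
      (∃ k : P → P, Function.Bijective k ∧
        ∀ (x y : P) (i : ℤ), x ≤ (f ^ i) y ↔ k x ≤ (g ^ i) (k y))) ∧
    ((∃ k : P ≃o P, ∀ x : P, k (f x) = g (k x)) ↔
      (∃ k : P → P, Function.Bijective k ∧
        ∀ (x y : P) (i : ℤ), (i = -1 ∨ i = 0 ∨ i = 1) →
          (x ≤ (f ^ i) y ↔ k x ≤ (g ^ i) (k y)))) := by
  have hUniv : ∀ (e : P ≃o P), (⇑e) '' (Set.univ : Set P) = Set.univ := by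
    intro e; simpa using e.surjective.range_eq
  refine ⟨⟨fun ⟨he, hc⟩ => one_to_two f g A hA h he hc,
    fun h2 => three_to_one f g A hA h (fun x hx y hy i _ => h2 x hx y hy i)⟩,
    ⟨fun h2 x hx y hy i _ => h2 x hx y hy i,
    fun h3 => by
      obtain ⟨he, hc⟩ := three_to_one f g A hA h h3
      exact one_to_two f g A hA h he hc⟩, ?_, ?_⟩
  · constructor
    · rintro ⟨k, hk⟩
      refine ⟨⇑k, k.bijective, fun x y i => ?_⟩
      have := one_to_two f g Set.univ (hUniv f) (⇑k)
        (fun x _ y _ => k.le_iff_le.symm) (fun x _ => hk x)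
      exact this x trivial y trivial i
    · rintro ⟨k, hbij, hrel⟩
      have ⟨he, hc⟩ := three_to_one f g Set.univ (hUniv f) k
        (fun x _ y _ i _ => hrel x y i)
      refine ⟨⟨Equiv.ofBijective k hbij, ?_⟩, fun x => hc x trivial⟩
      intro a b
      exact (he a trivial b trivial).symm
  · constructor
    · rintro ⟨k, hk⟩
      refine ⟨⇑k, k.bijective, fun x y i _ => ?_⟩
      have := one_to_two f g Set.univ (hUniv f) (⇑k)
        (fun x _ y _ => k.le_iff_le.symm) (fun x _ => hk x)
      exact this x trivial y trivial i
    · rintro ⟨k, hbij, hrel⟩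
      have ⟨he, hc⟩ := three_to_one f g Set.univ (hUniv f) k
        (fun x _ y _ i hi => hrel x y i hi)
      refine ⟨⟨Equiv.ofBijective k hbij, ?_⟩, fun x => hc x trivial⟩
      intro a b
      exact (he a trivial b trivial).symm
end

section
/- Let P be a partial order and f an order automorphism of P. On the quotient of P by the equivalence relation ∼_f: (1) the relation [x] <ˢ [y] defined by 'x' < y' for all x' ∼_f x and all y' ∼_f y' is well defined, irreflexive, and transitive (a strict partial order); (2) the relation [x] ≤ʷ [y] defined by 'x' ≤ y' for some x' ∼_f x and some y' ∼_f y' is well defined, reflexive, transitive, and antisymmetric (a partial order). -/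
variable {P : Type*} [PartialOrder P]

/-- The strong order on orbitals: `[x] <ˢ [y]` iff `x' < y'` for all `x' ∼_f x` and
`y' ∼_f y`. -/
def strongLt (f : P ≃o P) (x y : P) : Prop :=
  ∀ x' y' : P, orbRel f x' x → orbRel f y' y → x' < y'

/-- The weak order on orbitals: `[x] ≤ʷ [y]` iff `x' ≤ y'` for some `x' ∼_f x` and
`y' ∼_f y`. -/
def weakLe (f : P ≃o P) (x y : P) : Prop :=
  ∃ x' y' : P, orbRel f x' x ∧ orbRel f y' y ∧ x' ≤ y'


private lemma orb_comp (f : P ≃o P) (i j : ℤ) (x : P) :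
    (f ^ i) ((f ^ j) x) = (f ^ (i + j)) x := by rw [zpow_add]; rfl

private lemma orb_mono (f : P ≃o P) (i : ℤ) : Monotone (f ^ i) := (f ^ i).monotone

private lemma orbRel_refl (f : P ≃o P) (x : P) : orbRel f x x :=
  ⟨0, 0, by simp, by simp⟩

private lemma orbRel_symm {f : P ≃o P} {x y : P} (h : orbRel f x y) : orbRel f y x := by
  obtain ⟨i, j, h1, h2⟩ := h
  refine ⟨-j, -i, ?_, ?_⟩
  · have := orb_mono f (-j) h2
    rw [orb_comp, neg_add_cancel, zpow_zero] at this; exact this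
  · have := orb_mono f (-i) h1
    rw [orb_comp, neg_add_cancel, zpow_zero] at this; exact this

private lemma orbRel_trans {f : P ≃o P} {x y z : P} (h : orbRel f x y) (h' : orbRel f y z) :
    orbRel f x z := by
  obtain ⟨i, j, h1, h2⟩ := h
  obtain ⟨a, b, h3, h4⟩ := h'
  refine ⟨a + i, b + j, ?_, ?_⟩
  · calc (f ^ (a + i)) x = (f ^ a) ((f ^ i) x) := (orb_comp f a i x).symm
      _ ≤ (f ^ a) y := orb_mono f a h1
      _ ≤ z := h3
  · calc z ≤ (f ^ b) y := h4
      _ ≤ (f ^ b) ((f ^ j) x) := orb_mono f b h2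
      _ = (f ^ (b + j)) x := orb_comp f b j x

/-- On the quotient of `P` by `∼_f`: (1) the strong order is well defined on classes,
irreflexive, and transitive (a strict partial order); (2) the weak order is well defined
on classes, reflexive, transitive, and antisymmetric (with equality of classes given by
`∼_f`), i.e. a partial order. -/
theorem orbital_orders (f : P ≃o P) :
    ((∀ x x' y y' : P, orbRel f x x' → orbRel f y y' →
        (strongLt f x y ↔ strongLt f x' y')) ∧
      (∀ x : P, ¬ strongLt f x x) ∧
      (∀ x y z : P, strongLt f x y → strongLt f y z → strongLt f x z)) ∧
    ((∀ x x' y y' : P, orbRel f x x' → orbRel f y y' →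
        (weakLe f x y ↔ weakLe f x' y')) ∧
      (∀ x : P, weakLe f x x) ∧
      (∀ x y z : P, weakLe f x y → weakLe f y z → weakLe f x z) ∧
      (∀ x y : P, weakLe f x y → weakLe f y x → orbRel f x y)) := by
  constructor
  · refine ⟨?_, ?_, ?_⟩
    · intro x x' y y' hx hy
      constructor
      · intro h a b ha hb
        exact h a b (orbRel_trans ha (orbRel_symm hx)) (orbRel_trans hb (orbRel_symm hy))
      · intro h a b ha hb
        exact h a b (orbRel_trans ha hx) (orbRel_trans hb hy)
    · intro x h
      exact lt_irrefl x (h x x (orbRel_refl f x) (orbRel_refl f x))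
    · intro x y z hxy hyz a c ha hc
      exact lt_trans (hxy a y ha (orbRel_refl f y)) (hyz y c (orbRel_refl f y) hc)
  · refine ⟨?_, ?_, ?_, ?_⟩
    · intro x x' y y' hx hy
      constructor
      · rintro ⟨a, b, ha, hb, hab⟩
        exact ⟨a, b, orbRel_trans ha hx, orbRel_trans hb hy, hab⟩
      · rintro ⟨a, b, ha, hb, hab⟩
        exact ⟨a, b, orbRel_trans ha (orbRel_symm hx), orbRel_trans hb (orbRel_symm hy), hab⟩
    · intro x
      exact ⟨x, x, orbRel_refl f x, orbRel_refl f x, le_rfl⟩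
    · rintro x y z ⟨a, b, ha, hb, hab⟩ ⟨c, d, hc, hd, hcd⟩
      -- b ∼ y ∼ c, so ∃ i, f^i b ≤ c
      obtain ⟨i, j, h1, h2⟩ := orbRel_trans hb (orbRel_symm hc)
      refine ⟨(f ^ i) a, d, ?_, hd, ?_⟩
      · -- (f ^ i) a ∼ a ∼ x
        refine orbRel_trans ?_ ha
        exact ⟨-i, -i, by rw [orb_comp]; simp, by rw [orb_comp]; simp⟩
      · calc (f ^ i) a ≤ (f ^ i) b := orb_mono f i hab
          _ ≤ c := h1
          _ ≤ d := hcd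
    · rintro x y ⟨a, b, ha, hb, hab⟩ ⟨c, d, hc, hd, hcd⟩
      -- lower: ∃ i, f^i x ≤ y via x ∼ a ≤ b ∼ y
      obtain ⟨i, _, h1, _⟩ := orbRel_symm ha
      obtain ⟨k, _, h3, _⟩ := hb
      -- h1 : f^i x ≤ a, h3 : f^k b ≤ y
      -- upper: y ∼ c ≤ d ∼ x
      obtain ⟨_, m, _, h5⟩ := hc
      obtain ⟨_, n, _, h7⟩ := orbRel_symm hd
      -- h5 : y ≤ f^m c, h7 : d ≤ f^n x
      refine ⟨k + i, m + n, ?_, ?_⟩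
      · calc (f ^ (k + i)) x = (f ^ k) ((f ^ i) x) := (orb_comp f k i x).symm
          _ ≤ (f ^ k) a := orb_mono f k h1
          _ ≤ (f ^ k) b := orb_mono f k hab
          _ ≤ y := h3
      · calc y ≤ (f ^ m) c := h5
          _ ≤ (f ^ m) d := orb_mono f m hcd
          _ ≤ (f ^ m) ((f ^ n) x) := orb_mono f m h7
          _ = (f ^ (m + n)) x := orb_comp f m n x
end

section
/- Let P be a partial order, f an order automorphism of P, and x, y ∈ P. The following are equivalent: (i) x' < y' for all x' ∼_f x and all y' ∼_f y; (ii) f^n(x) < y for every n : ℤ; (iii) x < f^n(y) for every n : ℤ; (iv) x ≤ f^i(y) for every i : ℤ, and x ≠ y. -/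
variable {P : Type*} [PartialOrder P]

lemma zpow_apply_apply (f : P ≃o P) (n m : ℤ) (a : P) :
    (f ^ n) ((f ^ m) a) = (f ^ (n + m)) a := by rw [zpow_add]; rfl

lemma one_apply' (x : P) : (1 : P ≃o P) x = x := rfl

/-- Characterizations of the strong order on orbitals. The following are equivalent:
(i) `x' < y'` for all `x' ∼_f x` and `y' ∼_f y`; (ii) `f^n x < y` for all `n : ℤ`;
(iii) `x < f^n y` for all `n : ℤ`; (iv) `x ≤ f^i y` for all `i : ℤ`, and `x ≠ y`. -/
theorem strong_order_iff (f : P ≃o P) (x y : P) :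
    ((∀ x' y' : P, orbRel f x' x → orbRel f y' y → x' < y') ↔
      (∀ n : ℤ, (f ^ n) x < y)) ∧
    ((∀ x' y' : P, orbRel f x' x → orbRel f y' y → x' < y') ↔
      (∀ n : ℤ, x < (f ^ n) y)) ∧
    ((∀ x' y' : P, orbRel f x' x → orbRel f y' y → x' < y') ↔
      ((∀ i : ℤ, x ≤ (f ^ i) y) ∧ x ≠ y)) := by
  have hAB : (∀ x' y' : P, orbRel f x' x → orbRel f y' y → x' < y') ↔
      (∀ n : ℤ, (f ^ n) x < y) := by
    constructor
    · intro h n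
      refine h _ _ ⟨-n, -n, ?_, ?_⟩ ⟨0, 0, by simp [one_apply'], by simp [one_apply']⟩ <;>
        simp [zpow_apply_apply, one_apply']
    · intro h x' y' hx hy
      obtain ⟨i, _, hi, _⟩ := hx
      obtain ⟨_, j, _, hj⟩ := hy
      have h1 : x' ≤ (f ^ (-i)) x := by
        have := (f ^ (-i)).monotone hi
        rwa [zpow_apply_apply, neg_add_cancel, zpow_zero, one_apply'] at this
      have h2 : (f ^ (-j)) y ≤ y' := by
        have := (f ^ (-j)).monotone hj
        rwa [zpow_apply_apply, neg_add_cancel, zpow_zero, one_apply'] at this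
      have h3 : (f ^ (-i)) x < (f ^ (-j)) y := by
        have := (f ^ (-j)).strictMono (h (j + -i))
        rwa [zpow_apply_apply, neg_add_cancel_left] at this
      exact h1.trans_lt (h3.trans_le h2)
  have hBC : (∀ n : ℤ, (f ^ n) x < y) ↔ (∀ n : ℤ, x < (f ^ n) y) := by
    constructor
    · intro h n
      have := (f ^ n).strictMono (h (-n))
      rwa [zpow_apply_apply, add_neg_cancel, zpow_zero, one_apply'] at this
    · intro h n
      have := (f ^ n).strictMono (h (-n))
      rwa [zpow_apply_apply, add_neg_cancel, zpow_zero, one_apply'] at this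
  have hCD : (∀ n : ℤ, x < (f ^ n) y) ↔ ((∀ i : ℤ, x ≤ (f ^ i) y) ∧ x ≠ y) := by
    constructor
    · intro h
      refine ⟨fun i => (h i).le, ?_⟩
      have := h 0
      rw [zpow_zero, one_apply'] at this
      exact this.ne
    · rintro ⟨hle, hne⟩ n
      refine (hle n).lt_of_ne fun heq => ?_
      have key : ∀ m : ℤ, x ≤ (f ^ m) x := by
        intro m
        have := hle (m + n)
        rwa [← zpow_apply_apply, ← heq] at this
      have h1 : x ≤ (f ^ (-n)) x := key (-n)
      have h2 : (f ^ (-n)) x ≤ x := by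
        have := (f ^ (-n)).monotone (key n)
        rwa [zpow_apply_apply, neg_add_cancel, zpow_zero, one_apply'] at this
      have hy : y = x := by
        have h3 : (f ^ (-n)) x = x := le_antisymm h2 h1
        rw [heq, zpow_apply_apply, neg_add_cancel, zpow_zero, one_apply'] at h3
        rw [← heq] at h3; exact h3
      exact hne (hy ▸ rfl)
  exact ⟨hAB, hAB.trans hBC, hAB.trans (hBC.trans hCD)⟩
end

section
/- Let P be a partial order, f an order automorphism of P, and x, y, c ∈ P with f(c) = c and x < c < y. Then x' < y' for all x' ∼_f x and all y' ∼_f y (the orbital of x is strongly below the orbital of y); equivalently, x < f^n(y) for every n : ℤ. -/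
variable {P : Type*} [PartialOrder P]

lemma zpow_fixed (f : P ≃o P) {c : P} (hc : f c = c) : ∀ i : ℤ, (f ^ i) c = c := by
  have hn : ∀ n : ℕ, (f ^ n) c = c := by
    intro n
    induction n with
    | zero => simp
    | succ k ih =>
      rw [pow_succ]
      show (f ^ k) (f c) = c
      rw [hc, ih]
  have hinv : f⁻¹ c = c := by
    show f.symm c = c
    conv_lhs => rw [← hc]
    simp
  have hni : ∀ n : ℕ, ((f⁻¹) ^ n) c = c := by
    intro n
    induction n with
    | zero => simp
    | succ k ih =>
      rw [pow_succ]
      show (f⁻¹ ^ k) (f⁻¹ c) = c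
      rw [hinv, ih]
  intro i
  induction i using Int.rec with
  | ofNat n => simpa using hn n
  | negSucc n => rw [zpow_negSucc, ← inv_pow]; exact hni (n + 1)

/-- Forcing the strong order by fixed points: if `f c = c` and `x < c < y`, then the
orbital of `x` is strongly below the orbital of `y`: `x' < y'` for all `x' ∼_f x` and
`y' ∼_f y`; equivalently, `x < f^n y` for every `n : ℤ`. -/
theorem fixed_point_between_forces_strongLt (f : P ≃o P) (x y c : P)
    (hc : f c = c) (hxc : x < c) (hcy : c < y) :
    (∀ x' y' : P, orbRel f x' x → orbRel f y' y → x' < y') ∧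
    (∀ n : ℤ, x < (f ^ n) y) := by
  have hfix := zpow_fixed f hc
  constructor
  · rintro x' y' ⟨i, j, hix, _⟩ ⟨k, l, _, hly⟩
    have hx'c : x' < c := by
      have h1 : (f ^ i) x' < (f ^ i) c := by
        rw [hfix i]; exact lt_of_le_of_lt hix hxc
      exact (OrderIso.lt_iff_lt (f ^ i)).mp h1
    have hcy' : c < y' := by
      have h2 : (f ^ l) c < (f ^ l) y' := by
        rw [hfix l]; exact lt_of_lt_of_le hcy hly
      exact (OrderIso.lt_iff_lt (f ^ l)).mp h2
    exact hx'c.trans hcy'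
  · intro n
    have : (f ^ n) c < (f ^ n) y := (OrderIso.lt_iff_lt (f ^ n)).mpr hcy
    rw [hfix n] at this
    exact hxc.trans this
end

section
/- Let P be a partial order, f an order automorphism of P, and x, y, z ∈ P such that x < z, x < f(y), f(z) < z, y < f(y), x is incomparable to f(z), and x is incomparable to y. Then for every n : ℤ with n ≠ 0, x and f^n(x) are incomparable; that is, the orbit {f^n(x) : n ∈ ℤ} is an infinite antichain and sp(x, f) = ∞. -/
variable {P : Type*} [PartialOrder P]

private lemma iter_le_aux (f : P ≃o P) (a : P) (h : f a ≤ a) : ∀ k : ℕ, (f ^ k) a ≤ a := by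
  intro k
  induction k with
  | zero => simp
  | succ k ih =>
    have e : (f ^ (k + 1)) a = (f ^ k) (f a) := by rw [pow_succ]; rfl
    rw [e]
    exact le_trans ((f ^ k).monotone h) ih

/-- "M" configurations force infinite spiral length: if `x < z`, `x < f y`, `f z < z`,
`y < f y`, `x` is incomparable to `f z`, and `x` is incomparable to `y`, then `x` is
incomparable to `f^n x` for every `n ≠ 0`; that is, the orbit `{f^n x : n ∈ ℤ}` is an
infinite antichain and `sp(x, f) = ∞`. -/
theorem M_configuration_forces_infinite_spiral (f : P ≃o P) (x y z : P)
    (hxz : x < z) (hxfy : x < f y) (hfz : f z < z) (hyfy : y < f y)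
    (hxfz : ¬ x ≤ f z ∧ ¬ f z ≤ x) (hxy : ¬ x ≤ y ∧ ¬ y ≤ x) :
    (∀ n : ℤ, n ≠ 0 → ¬ x ≤ (f ^ n) x ∧ ¬ (f ^ n) x ≤ x) ∧
    Function.Injective (fun n : ℤ => (f ^ n) x) ∧
    spiral f x = ⊤ := by
  -- Key: ¬ x ≤ f^n x  for n ≠ 0
  have notle : ∀ n : ℤ, n ≠ 0 → ¬ x ≤ (f ^ n) x := by
    intro n hn h
    rcases lt_or_gt_of_ne hn with hneg | hpos
    · -- n ≤ -1 : x ≤ f^n x < f^n (f y) = f^(n+1) y ≤ y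
      have h1 : (f ^ n) x < (f ^ n) (f y) := (f ^ n).strictMono hxfy
      have e1 : (f ^ n) (f y) = (f ^ (n + 1)) y := by
        rw [zpow_add_one]; rfl
      have h2 : (f ^ (n + 1)) y ≤ y := by
        have hinv : f⁻¹ y ≤ y := by
          have := f.symm.monotone hyfy.le
          exact (by simpa using this : f.symm y ≤ y)
        have e2 : f ^ (n + 1) = f⁻¹ ^ (-(n + 1)).toNat := by
          rw [← zpow_natCast, Int.toNat_of_nonneg (by omega : (0:ℤ) ≤ -(n+1)),
            inv_zpow, ← zpow_neg, neg_neg]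
        rw [e2]
        exact iter_le_aux f⁻¹ y hinv _
      exact hxy.1 (h.trans (h1.le.trans (e1 ▸ h2)))
    · -- n ≥ 1 : x ≤ f^n x < f^n z ≤ f z
      have h1 : (f ^ n) x < (f ^ n) z := (f ^ n).strictMono hxz
      have h2 : (f ^ n) z ≤ f z := by
        have hff : f (f z) ≤ f z := f.monotone hfz.le
        have e : f ^ n = f ^ (n - 1) * f := by rw [← zpow_add_one]; congr 1; ring
        have e1 : (f ^ n) z = (f ^ (n - 1)) (f z) := by rw [e]; rfl
        rw [e1, ← Int.toNat_of_nonneg (by omega : (0:ℤ) ≤ n - 1), zpow_natCast]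
        exact iter_le_aux f (f z) hff _
      exact hxfz.1 (h.trans (h1.le.trans h2))
  have notge : ∀ n : ℤ, n ≠ 0 → ¬ (f ^ n) x ≤ x := by
    intro n hn h
    have h2 : x ≤ (f ^ (-n)) x := by
      have := (f ^ (-n)).monotone h
      have e : (f ^ (-n)) ((f ^ n) x) = x := by
        have : (f ^ (-n)) ((f ^ n) x) = (f ^ (-n) * f ^ n) x := rfl
        rw [this, ← zpow_add]; simp
      rwa [e] at this
    exact notle (-n) (by omega) h2
  refine ⟨fun n hn => ⟨notle n hn, notge n hn⟩, ?_, ?_⟩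
  · intro a b hab
    by_contra hne
    simp only at hab
    have : (f ^ (a - b)) x = x := by
      have h1 := congrArg (f ^ (-b)) hab
      have e1 : (f ^ (-b)) ((f ^ a) x) = (f ^ (-b + a)) x := by rw [zpow_add]; rfl
      have e2 : (f ^ (-b)) ((f ^ b) x) = (f ^ (-b + b)) x := by rw [zpow_add]; rfl
      rw [e1, e2, neg_add_cancel, zpow_zero] at h1
      simpa [add_comm, sub_eq_add_neg] using h1
    exact notle (a - b) (by omega) this.ge
  · have he : {m : ℕ | 1 ≤ m ∧ (x ≤ (f ^ (m : ℤ)) x ∨ (f ^ (m : ℤ)) x ≤ x)} = ∅ := by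
      ext m
      simp only [Set.mem_setOf_eq, Set.mem_empty_iff_false, iff_false, not_and]
      intro hm
      have hm0 : (m : ℤ) ≠ 0 := by exact_mod_cast (by omega : m ≠ 0)
      rintro (h | h)
      · exact notle _ hm0 h
      · exact notge _ hm0 h
    rw [spiral, he]
    simp
end

section
/- Let P be a partial order, f an order automorphism of P, x ∈ P, and F ⊆ P a finite set disjoint from the orbit {f^i(x) : i ∈ ℤ}. Then for every M : ℕ there exists k : ℤ with k ≥ M such that the set of n : ℤ with n ≠ 0 and such that for all y ∈ F, (f^k(x) < y ↔ f^{k+n}(x) < y) and (y < f^k(x) ↔ y < f^{k+n}(x)), is infinite; and likewise there exists k : ℤ with k ≤ −M with the same property. -/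
variable {P : Type*} [PartialOrder P]

open Classical in
private lemma key_qftp (f : P ≃o P) (x : P) (F : Finset P) (s : Set ℤ) (hs : s.Infinite) :
    ∃ k ∈ s, {n : ℤ | n ≠ 0 ∧ ∀ y ∈ F,
          ((f ^ k) x < y ↔ (f ^ (k + n)) x < y) ∧
          (y < (f ^ k) x ↔ y < (f ^ (k + n)) x)}.Infinite := by
  classical
  set τ : ℤ → ({y // y ∈ F} → Bool × Bool) :=
    fun i y => (decide ((f ^ i) x < y.1), decide (y.1 < (f ^ i) x)) with hτ
  haveI : Infinite s := hs.to_subtype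
  obtain ⟨c, hc⟩ := Finite.exists_infinite_fiber (fun i : s => τ i)
  have hT : {i : ℤ | i ∈ s ∧ τ i = c}.Infinite := by
    have h1 : ((Subtype.val : s → ℤ) '' ((fun i : s => τ i) ⁻¹' {c})).Infinite :=
      (Set.infinite_coe_iff.mp hc).image (Subtype.val_injective.injOn)
    refine h1.mono ?_
    rintro i ⟨⟨j, hj⟩, hji, rfl⟩
    exact ⟨hj, hji⟩
  obtain ⟨k, hks, hkc⟩ := hT.nonempty
  refine ⟨k, hks, ?_⟩
  have h2 : ((· - k) '' ({i : ℤ | i ∈ s ∧ τ i = c} \ {k})).Infinite :=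
    ((hT.diff (Set.finite_singleton k)).image (sub_left_injective.injOn))
  refine h2.mono ?_
  rintro n ⟨m, ⟨⟨hms, hmc⟩, hmk⟩, rfl⟩
  have hkm : k + (m - k) = m := by ring
  refine ⟨fun h0 => hmk (by simpa using sub_eq_zero.mp h0), fun y hy => ?_⟩
  have := congrFun (hkc.trans hmc.symm) ⟨y, hy⟩
  rw [hτ] at this
  simp only [Prod.mk.injEq, decide_eq_decide] at this
  rw [hkm]
  exact this

/-- Pigeonhole for quantifier-free order types over a finite set: if `F` is finite and
disjoint from the orbit of `x`, then for every `M` there is `k ≥ M` (and likewise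
`k ≤ −M`) such that infinitely many `n ≠ 0` satisfy that `f^k x` and `f^{k+n} x` have
the same quantifier-free order type over `F`. -/
theorem infinitely_many_same_qftp (f : P ≃o P) (x : P) (F : Finset P)
    (hdisj : ∀ y ∈ F, ∀ i : ℤ, (f ^ i) x ≠ y) :
    ∀ M : ℕ,
      (∃ k : ℤ, (M : ℤ) ≤ k ∧
        {n : ℤ | n ≠ 0 ∧ ∀ y ∈ F,
          ((f ^ k) x < y ↔ (f ^ (k + n)) x < y) ∧
          (y < (f ^ k) x ↔ y < (f ^ (k + n)) x)}.Infinite) ∧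
      (∃ k : ℤ, k ≤ -(M : ℤ) ∧
        {n : ℤ | n ≠ 0 ∧ ∀ y ∈ F,
          ((f ^ k) x < y ↔ (f ^ (k + n)) x < y) ∧
          (y < (f ^ k) x ↔ y < (f ^ (k + n)) x)}.Infinite) := by
  intro M
  constructor
  · obtain ⟨k, hk, h⟩ := key_qftp f x F (Set.Ici (M : ℤ)) (Set.Ici_infinite _)
    exact ⟨k, hk, h⟩
  · obtain ⟨k, hk, h⟩ := key_qftp f x F (Set.Iic (-(M : ℤ))) (Set.Iic_infinite _)
    exact ⟨k, hk, h⟩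
end

section
/- Let P be a partial order, f an order automorphism of P, x ∈ P, F ⊆ P a finite set disjoint from the orbit {f^i(x) : i ∈ ℤ}, and n ≥ 1. Suppose there exist α, β ∈ P such that: parity(α, f) = +1 and parity(β, f) = −1; sp(α, f) = sp(β, f) = n; α < x < β; and for each integer i with 0 ≤ i ≤ n and each y ∈ F, the points f^i(α), f^i(β), and f^i(x) all have the same quantifier-free order type over F (i.e. for all y ∈ F: y < f^i(α) ↔ y < f^i(x) ↔ y < f^i(β), and f^i(α) < y ↔ f^i(x) < y ↔ f^i(β) < y). Then for every y ∈ F, every integer i ≥ 0, and every integer k ≥ 0: (y ≤ f^i(x) ↔ y ≤ f^{i+kn}(x)) and (f^i(x) ≤ y ↔ f^{i+kn}(x) ≤ y); that is, the sequences i ↦ (y ≤ f^i(x)) for i ≥ 0 and i ↦ (f^i(x) ≤ y) for i ≥ 0 are n-periodic. -/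
variable {P : Type*} [PartialOrder P]

/-- Tightening spirals force periodicity: let `F` be finite and disjoint from the orbit
of `x`, `n ≥ 1`, and suppose `α, β` have parities `+1, −1` and spiral length `n`, with
`α < x < β`, such that for `0 ≤ i ≤ n` the points `f^i α`, `f^i β`, `f^i x` have the
same quantifier-free order type over `F`. Then for all `y ∈ F` and `i, k ≥ 0`,
`y ≤ f^i x ↔ y ≤ f^{i+kn} x` and `f^i x ≤ y ↔ f^{i+kn} x ≤ y`; i.e. the sequences
`i ↦ (y ≤ f^i x)` and `i ↦ (f^i x ≤ y)` (for `i ≥ 0`) are `n`-periodic. -/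
theorem tightening_spirals (f : P ≃o P) (x : P) (F : Finset P)
    (hdisj : ∀ y ∈ F, ∀ i : ℤ, (f ^ i) x ≠ y)
    (n : ℕ) (hn : 1 ≤ n) (α β : P)
    (hpα : parity f α = 1) (hpβ : parity f β = -1)
    (hsα : spiral f α = (n : ℕ∞)) (hsβ : spiral f β = (n : ℕ∞))
    (hαx : α < x) (hxβ : x < β)
    (htp : ∀ i : ℕ, i ≤ n → ∀ y ∈ F,
      ((y < (f ^ (i : ℤ)) α ↔ y < (f ^ (i : ℤ)) x) ∧
        (y < (f ^ (i : ℤ)) x ↔ y < (f ^ (i : ℤ)) β)) ∧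
      (((f ^ (i : ℤ)) α < y ↔ (f ^ (i : ℤ)) x < y) ∧
        ((f ^ (i : ℤ)) x < y ↔ (f ^ (i : ℤ)) β < y))) :
    ∀ y ∈ F, ∀ i : ℕ, ∀ k : ℕ,
      (y ≤ (f ^ (i : ℤ)) x ↔ y ≤ (f ^ ((i : ℤ) + (k : ℤ) * (n : ℤ))) x) ∧
      ((f ^ (i : ℤ)) x ≤ y ↔ (f ^ ((i : ℤ) + (k : ℤ) * (n : ℤ))) x ≤ y) := by
  have hα : α < (f ^ (n : ℤ)) α := by
    have h1 : ∃ m : ℕ, spiral f α = (m : ℕ∞) ∧ α < (f ^ (m : ℤ)) α := by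
      by_contra hc
      unfold parity at hpα
      rw [if_neg hc] at hpα
      split_ifs at hpα <;> omega
    obtain ⟨m, hm, hlt⟩ := h1
    rw [hsα] at hm
    have hnm : n = m := by exact_mod_cast hm
    rwa [← hnm] at hlt
  have hβ : (f ^ (n : ℤ)) β < β := by
    have h2 : ∃ m : ℕ, spiral f β = (m : ℕ∞) ∧ (f ^ (m : ℤ)) β < β := by
      by_contra hc
      unfold parity at hpβ
      split_ifs at hpβ
    obtain ⟨m, hm, hlt⟩ := h2
    rw [hsβ] at hm
    have hnm : n = m := by exact_mod_cast hm
    rwa [← hnm] at hlt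
  have mono : ∀ (i : ℤ) {a b : P}, a < b → (f ^ i) a < (f ^ i) b :=
    fun i _ _ h => (f ^ i).lt_iff_lt.2 h
  have hcomp : ∀ (i : ℤ) (a : P), (f ^ (i + (n : ℤ))) a = (f ^ i) ((f ^ (n : ℤ)) a) := by
    intro i a
    rw [zpow_add]; rfl
  have A : ∀ i : ℕ, ∀ y ∈ F,
      ((y < (f ^ (i : ℤ)) α ↔ y < (f ^ (i : ℤ)) x) ∧
        (y < (f ^ (i : ℤ)) x ↔ y < (f ^ (i : ℤ)) β)) ∧
      (((f ^ (i : ℤ)) α < y ↔ (f ^ (i : ℤ)) x < y) ∧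
        ((f ^ (i : ℤ)) x < y ↔ (f ^ (i : ℤ)) β < y)) := by
    intro i
    induction i using Nat.strong_induction_on with
    | _ i IH =>
      by_cases hi : i ≤ n
      · exact htp i hi
      · push_neg at hi
        have hji : i - n < i := by omega
        have hin : (i : ℤ) = ((i - n : ℕ) : ℤ) + (n : ℤ) := by
          have : n ≤ i := le_of_lt hi
          push_cast [this]
          ring
        set j := i - n with hj
        intro y hy
        have IHj := IH j hji y hy
        have hαj : (f ^ (j : ℤ)) α < (f ^ (i : ℤ)) α := by
          rw [hin, hcomp]; exact mono _ hα
        have hβj : (f ^ (i : ℤ)) β < (f ^ (j : ℤ)) β := by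
          rw [hin, hcomp]; exact mono _ hβ
        have hax : (f ^ (i : ℤ)) α < (f ^ (i : ℤ)) x := mono _ hαx
        have hxb : (f ^ (i : ℤ)) x < (f ^ (i : ℤ)) β := mono _ hxβ
        have hba : y < (f ^ (i : ℤ)) β → y < (f ^ (i : ℤ)) α := by
          intro h
          have h1 : y < (f ^ (j : ℤ)) α :=
            (IHj.1.1.trans IHj.1.2).2 (h.trans hβj)
          exact h1.trans hαj
        have hab : (f ^ (i : ℤ)) α < y → (f ^ (i : ℤ)) β < y := by
          intro h
          have h1 : (f ^ (j : ℤ)) β < y :=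
            (IHj.2.1.trans IHj.2.2).1 (hαj.trans h)
          exact hβj.trans h1
        exact ⟨⟨⟨fun h => h.trans hax, fun h => hba (h.trans hxb)⟩,
          ⟨fun h => h.trans hxb, fun h => (hba h).trans hax⟩⟩,
          ⟨⟨fun h => hxb.trans (hab h), fun h => hax.trans h⟩,
          ⟨fun h => hab (hax.trans h), fun h => hxb.trans h⟩⟩⟩
  have step : ∀ y ∈ F, ∀ m : ℕ,
      (y ≤ (f ^ (m : ℤ)) x ↔ y ≤ (f ^ ((m : ℤ) + (n : ℤ))) x) ∧
      ((f ^ (m : ℤ)) x ≤ y ↔ (f ^ ((m : ℤ) + (n : ℤ))) x ≤ y) := by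
    intro y hy m
    have Am := A m y hy
    have hne : ∀ i : ℤ, y ≠ (f ^ i) x := fun i => (hdisj y hy i).symm
    have lt_le : ∀ i : ℤ, (y ≤ (f ^ i) x ↔ y < (f ^ i) x) :=
      fun i => ⟨fun h => h.lt_of_ne (hne i), fun h => h.le⟩
    have le_lt : ∀ i : ℤ, ((f ^ i) x ≤ y ↔ (f ^ i) x < y) :=
      fun i => ⟨fun h => h.lt_of_ne (hdisj y hy i), fun h => h.le⟩
    have hαm : (f ^ (m : ℤ)) α < (f ^ ((m : ℤ) + (n : ℤ))) α := by
      rw [hcomp]; exact mono _ hα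
    have hβm : (f ^ ((m : ℤ) + (n : ℤ))) β < (f ^ (m : ℤ)) β := by
      rw [hcomp]; exact mono _ hβ
    have hax : ∀ i : ℤ, (f ^ i) α < (f ^ i) x := fun i => mono i hαx
    have hxb : ∀ i : ℤ, (f ^ i) x < (f ^ i) β := fun i => mono i hxβ
    constructor
    · rw [lt_le, lt_le]
      exact ⟨fun h => ((Am.1.1.2 h).trans hαm).trans (hax _),
        fun h => Am.1.2.2 ((h.trans (hxb _)).trans hβm)⟩
    · rw [le_lt, le_lt]
      exact ⟨fun h => (hxb _).trans (hβm.trans (Am.2.2.1 h)),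
        fun h => Am.2.1.1 (hαm.trans ((hax _).trans h))⟩
  intro y hy i k
  induction k with
  | zero => simp
  | succ k IHk =>
    have hc : (i : ℤ) + ((k : ℤ) + 1) * (n : ℤ) = ((i + k * n : ℕ) : ℤ) + (n : ℤ) := by
      push_cast; ring
    have hc2 : ((i + k * n : ℕ) : ℤ) = (i : ℤ) + (k : ℤ) * (n : ℤ) := by push_cast; ring
    have hs := step y hy (i + k * n)
    rw [hc2] at hs
    push_cast
    rw [hc]
    rw [hc2]
    exact ⟨IHk.1.trans hs.1, IHk.2.trans hs.2⟩
end

section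
/- Let P be a partial order satisfying the one-point extension property. Then for every finite partial order Q, every subset A ⊆ Q, and every order embedding φ : A ↪ P (with respect to the order induced from Q), there exists an order embedding ψ : Q ↪ P whose restriction to A equals φ. -/
/-- A partial order `P` satisfies the one-point extension property if for all finite
subsets `A, B, C` with `a < b` for `a ∈ A`, `b ∈ B`, no `c ∈ C` below any `a ∈ A`, and
no `b ∈ B` below any `c ∈ C`, there is a point `z` strictly above every `a ∈ A`,
strictly below every `b ∈ B`, and incomparable to every `c ∈ C`. -/
def OnePointExt (P : Type*) [PartialOrder P] : Prop :=
  ∀ A B C : Finset P,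
    (∀ a ∈ A, ∀ b ∈ B, a < b) →
    (∀ c ∈ C, ∀ a ∈ A, ¬ c ≤ a) →
    (∀ b ∈ B, ∀ c ∈ C, ¬ b ≤ c) →
    ∃ z : P, (∀ a ∈ A, a < z) ∧ (∀ b ∈ B, z < b) ∧ (∀ c ∈ C, ¬ z ≤ c ∧ ¬ c ≤ z)

private lemma extend_one {P : Type*} [PartialOrder P] (hP : OnePointExt P)
    {Q : Type*} [PartialOrder Q] [Finite Q] (A : Set Q) (φ : A → P)
    (hφ : ∀ a b : A, ((a : Q) ≤ (b : Q) ↔ φ a ≤ φ b)) (q : Q) (hq : q ∉ A) :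
    ∃ φ' : ↥(insert q A) → P,
      (∀ a b : ↥(insert q A), ((a : Q) ≤ (b : Q) ↔ φ' a ≤ φ' b)) ∧
      ∀ a : A, φ' ⟨a, Set.mem_insert_of_mem _ a.2⟩ = φ a := by
  classical
  have hlt : ∀ a b : A, ((a : Q) < (b : Q) ↔ φ a < φ b) := by
    intro a b
    rw [lt_iff_le_not_ge, lt_iff_le_not_ge, hφ a b, hφ b a]
  have hfA : (φ '' {a : A | (a : Q) < q}).Finite := Set.toFinite _
  have hfB : (φ '' {a : A | q < (a : Q)}).Finite := Set.toFinite _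
  have hfC : (φ '' {a : A | ¬ (a : Q) ≤ q ∧ ¬ q ≤ (a : Q)}).Finite := Set.toFinite _
  have cond1 : ∀ p ∈ hfA.toFinset, ∀ p' ∈ hfB.toFinset, p < p' := by
    intro p hp p' hp'
    obtain ⟨a, ha, rfl⟩ := hfA.mem_toFinset.1 hp
    obtain ⟨b, hb, rfl⟩ := hfB.mem_toFinset.1 hp'
    exact (hlt a b).1 (lt_trans ha hb)
  have cond2 : ∀ p ∈ hfC.toFinset, ∀ p' ∈ hfA.toFinset, ¬ p ≤ p' := by
    intro p hp p' hp'
    obtain ⟨c, hc, rfl⟩ := hfC.mem_toFinset.1 hp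
    obtain ⟨a, ha, rfl⟩ := hfA.mem_toFinset.1 hp'
    intro hle
    exact hc.1 (le_trans ((hφ c a).2 hle) ha.le)
  have cond3 : ∀ p ∈ hfB.toFinset, ∀ p' ∈ hfC.toFinset, ¬ p ≤ p' := by
    intro p hp p' hp'
    obtain ⟨b, hb, rfl⟩ := hfB.mem_toFinset.1 hp
    obtain ⟨c, hc, rfl⟩ := hfC.mem_toFinset.1 hp'
    intro hle
    exact hc.2 (le_trans hb.le ((hφ b c).2 hle))
  obtain ⟨z, hzA, hzB, hzC⟩ :=
    hP hfA.toFinset hfB.toFinset hfC.toFinset cond1 cond2 cond3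
  refine ⟨fun x => if h : (x : Q) ∈ A then φ ⟨x, h⟩ else z, ?_, ?_⟩
  · rintro ⟨x, hx⟩ ⟨y, hy⟩
    by_cases hxA : x ∈ A <;> by_cases hyA : y ∈ A
    · simp only [dif_pos hxA, dif_pos hyA]
      exact hφ ⟨x, hxA⟩ ⟨y, hyA⟩
    · -- y = q
      have hyq : y = q := by
        rcases hy with h | h
        · exact h
        · exact absurd h hyA
      subst hyq
      simp only [dif_pos hxA, dif_neg hyA]
      by_cases h1 : x ≤ y <;> by_cases h2 : y ≤ x
      · exact absurd (le_antisymm h1 h2 ▸ hxA) hq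
      · have hxq : x < y := lt_of_le_of_ne h1 (by rintro rfl; exact hq hxA)
        have : φ ⟨x, hxA⟩ < z := hzA _ (hfA.mem_toFinset.2 ⟨⟨x, hxA⟩, hxq, rfl⟩)
        exact iff_of_true h1 this.le
      · have hqx : y < x := lt_of_le_of_ne h2 (by rintro rfl; exact hq hxA)
        have hz : z < φ ⟨x, hxA⟩ := hzB _ (hfB.mem_toFinset.2 ⟨⟨x, hxA⟩, hqx, rfl⟩)
        exact iff_of_false h1 (fun hle => absurd (lt_of_lt_of_le hz hle) (lt_irrefl _))
      · have hc := hzC _ (hfC.mem_toFinset.2 ⟨⟨x, hxA⟩, ⟨h1, h2⟩, rfl⟩)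
        exact iff_of_false h1 hc.2
    · -- x = q
      have hxq : x = q := by
        rcases hx with h | h
        · exact h
        · exact absurd h hxA
      subst hxq
      simp only [dif_neg hxA, dif_pos hyA]
      by_cases h1 : x ≤ (y : Q) <;> by_cases h2 : (y : Q) ≤ x
      · exact absurd (le_antisymm h2 h1 ▸ hyA) hq
      · have hxy : x < y := lt_of_le_of_ne h1 (by rintro rfl; exact hq hyA)
        have : z < φ ⟨y, hyA⟩ := hzB _ (hfB.mem_toFinset.2 ⟨⟨y, hyA⟩, hxy, rfl⟩)
        exact iff_of_true h1 this.le
      · have hyx : (y : Q) < x := lt_of_le_of_ne h2 (by rintro rfl; exact hq hyA)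
        have hz : φ ⟨y, hyA⟩ < z := hzA _ (hfA.mem_toFinset.2 ⟨⟨y, hyA⟩, hyx, rfl⟩)
        exact iff_of_false h1 (fun hle => absurd (lt_of_le_of_lt hle hz) (lt_irrefl _))
      · have hc := hzC _ (hfC.mem_toFinset.2 ⟨⟨y, hyA⟩, ⟨h2, h1⟩, rfl⟩)
        exact iff_of_false h1 hc.1
    · -- x = y = q
      have hxq : x = q := by
        rcases hx with h | h
        · exact h
        · exact absurd h hxA
      have hyq : y = q := by
        rcases hy with h | h
        · exact h
        · exact absurd h hyA
      subst hxq; subst hyq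
      simp
  · intro a
    simp only [dif_pos a.2]

private lemma total_ext {P : Type*} [PartialOrder P] (hP : OnePointExt P)
    {Q : Type*} [PartialOrder Q] [Finite Q] :
    ∀ n : ℕ, ∀ A : Set Q, ∀ φ : A → P,
      (∀ a b : A, ((a : Q) ≤ (b : Q) ↔ φ a ≤ φ b)) → Aᶜ.ncard ≤ n →
      ∃ g : Q → P, (∀ x y : Q, x ≤ y ↔ g x ≤ g y) ∧ ∀ a : A, g a = φ a := by
  intro n
  induction n with
  | zero =>
    intro A φ hφ hcard
    have hAc : Aᶜ = ∅ := by
      have := (Set.ncard_eq_zero (Set.toFinite _)).1 (Nat.le_zero.1 hcard)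
      exact this
    have hA : ∀ x : Q, x ∈ A := by
      intro x
      by_contra hx
      exact absurd (hAc ▸ hx : x ∈ (∅ : Set Q)) (Set.notMem_empty x)
    refine ⟨fun x => φ ⟨x, hA x⟩, fun x y => hφ ⟨x, hA x⟩ ⟨y, hA y⟩, fun a => ?_⟩
    congr
  | succ n ih =>
    intro A φ hφ hcard
    rcases Set.eq_empty_or_nonempty Aᶜ with hAc | ⟨q, hq⟩
    · have hA : ∀ x : Q, x ∈ A := by
        intro x
        by_contra hx
        exact absurd (hAc ▸ hx : x ∈ (∅ : Set Q)) (Set.notMem_empty x)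
      refine ⟨fun x => φ ⟨x, hA x⟩, fun x y => hφ ⟨x, hA x⟩ ⟨y, hA y⟩, fun a => ?_⟩
      congr
    · obtain ⟨φ', hφ', hres⟩ := extend_one hP A φ hφ q hq
      have hcomp : (insert q A)ᶜ = Aᶜ \ {q} := by
        ext x
        simp only [Set.mem_compl_iff, Set.mem_insert_iff, Set.mem_diff,
          Set.mem_singleton_iff]
        tauto
      have hcard' : (insert q A)ᶜ.ncard ≤ n := by
        rw [hcomp]
        have := Set.ncard_diff_singleton_add_one hq (Set.toFinite _)
        omega
      obtain ⟨g, hg, hres'⟩ := ih (insert q A) φ' hφ' hcard'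
      refine ⟨g, hg, fun a => ?_⟩
      have := hres' ⟨a, Set.mem_insert_of_mem _ a.2⟩
      rw [this, hres a]

/-- Universal-homogeneity: if `P` has the one-point extension property, then for every
finite partial order `Q`, every subset `A ⊆ Q`, and every order embedding `φ` of `A`
(with the induced order) into `P`, there is an order embedding `ψ : Q ↪o P` whose
restriction to `A` is `φ`. -/
theorem universal_homogeneity {P : Type*} [PartialOrder P] (hP : OnePointExt P)
    (Q : Type*) [PartialOrder Q] [Finite Q] (A : Set Q) (φ : A → P)
    (hφ : ∀ a b : A, ((a : Q) ≤ (b : Q) ↔ φ a ≤ φ b)) :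
    ∃ ψ : Q ↪o P, ∀ a : A, ψ (a : Q) = φ a := by
  obtain ⟨g, hg, hres⟩ := total_ext hP Aᶜ.ncard A φ hφ le_rfl
  exact ⟨OrderEmbedding.ofMapLEIff g (fun a b => (hg a b).symm), hres⟩
end
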